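/- arXiv:1511.04047 — 3 statements merged into one kernel-verified Lean document; each statement's English description precedes it below -/
import Mathlib

section
/- Let Ω : ℝ² → ℂ be given by Ω(k) = 1 + e^{−i k·ℓ₁} + e^{−i k·ℓ₂} with ℓ₁ = (3/2, −√3/2), ℓ₂ = (3/2, √3/2). Then Ω(k) = 0 if and only if k is congruent, modulo the reciprocal lattice generated by G₁ = (2π/3)(1, −√3) and G₂ = (2π/3)(1, √3), to one of the two Fermi points k_F^± = (2π/3, ±2π/(3√3)). -/
lemma cos_two_pi_div_three : Real.cos (2*Real.pi/3) = -(1/2) := by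
  have : (2*Real.pi/3) = Real.pi - Real.pi/3 := by ring
  rw [this, Real.cos_pi_sub, Real.cos_pi_div_three]

lemma sin_two_pi_div_three : Real.sin (2*Real.pi/3) = Real.sqrt 3 / 2 := by
  have : (2*Real.pi/3) = Real.pi - Real.pi/3 := by ring
  rw [this, Real.sin_pi_sub, Real.sin_pi_div_three]

lemma aux_char (x : ℝ) (hc : Real.cos x = -(1/2)) (hs : Real.sin x = Real.sqrt 3 / 2) :
    ∃ m : ℤ, x = 2*Real.pi/3 + 2*Real.pi*m := by
  have h : Complex.exp ((x:ℂ) * Complex.I) = Complex.exp (((2*Real.pi/3 : ℝ):ℂ) * Complex.I) := by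
    rw [Complex.exp_mul_I, Complex.exp_mul_I,
      ← Complex.ofReal_cos, ← Complex.ofReal_cos, ← Complex.ofReal_sin, ← Complex.ofReal_sin,
      hc, hs, cos_two_pi_div_three, sin_two_pi_div_three]
  obtain ⟨n, hn⟩ := Complex.exp_eq_exp_iff_exists_int.mp h
  refine ⟨n, ?_⟩
  have h2 := congrArg Complex.im hn
  simp at h2; linarith

lemma aux_char_neg (x : ℝ) (hc : Real.cos x = -(1/2)) (hs : Real.sin x = -(Real.sqrt 3 / 2)) :
    ∃ m : ℤ, x = -(2*Real.pi/3) + 2*Real.pi*m := by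
  obtain ⟨m, hm⟩ := aux_char (-x) (by simpa using hc) (by simp [hs])
  exact ⟨-m, by push_cast; linarith⟩

-- backward computation
lemma aux_exp (c : ℝ) (m : ℤ) :
    Complex.exp (-Complex.I * ((c + 2*Real.pi*m : ℝ) : ℂ)) =
      Complex.exp (((-c : ℝ) : ℂ) * Complex.I) := by
  have : -Complex.I * ((c + 2*Real.pi*m : ℝ) : ℂ) =
      ((-c : ℝ) : ℂ) * Complex.I + (-m : ℤ) * (2*(Real.pi:ℂ)*Complex.I) := by
    push_cast; ring
  rw [this, Complex.exp_add, Complex.exp_int_mul_two_pi_mul_I, mul_one]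

lemma aux_sum : 1 + Complex.exp (((-(2*Real.pi/3) : ℝ) : ℂ) * Complex.I)
    + Complex.exp (((2*Real.pi/3 : ℝ) : ℂ) * Complex.I) = 0 := by
  rw [Complex.exp_mul_I, Complex.exp_mul_I,
    ← Complex.ofReal_cos, ← Complex.ofReal_cos, ← Complex.ofReal_sin, ← Complex.ofReal_sin,
    Real.cos_neg, Real.sin_neg, cos_two_pi_div_three, sin_two_pi_div_three]
  push_cast; ring

lemma aux_iff (x y : ℝ) :
    1 + Complex.exp (-Complex.I * (x:ℂ)) + Complex.exp (-Complex.I * (y:ℂ)) = 0 ↔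
    ((∃ m : ℤ, x = 2*Real.pi/3 + 2*Real.pi*m) ∧ (∃ n : ℤ, y = -(2*Real.pi/3) + 2*Real.pi*n)) ∨
    ((∃ m : ℤ, x = -(2*Real.pi/3) + 2*Real.pi*m) ∧ (∃ n : ℤ, y = 2*Real.pi/3 + 2*Real.pi*n)) := by
  have s3 : Real.sqrt 3 ^ 2 = 3 := Real.sq_sqrt (by norm_num)
  constructor
  · intro h
    have rx : -Complex.I * (x:ℂ) = ((-x : ℝ):ℂ) * Complex.I := by push_cast; ring
    have ry : -Complex.I * (y:ℂ) = ((-y : ℝ):ℂ) * Complex.I := by push_cast; ring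
    rw [rx, ry, Complex.exp_mul_I, Complex.exp_mul_I,
      ← Complex.ofReal_cos, ← Complex.ofReal_cos, ← Complex.ofReal_sin, ← Complex.ofReal_sin,
      Complex.ext_iff] at h
    simp only [Complex.add_re, Complex.add_im, Complex.one_re, Complex.one_im, Complex.ofReal_re,
      Complex.ofReal_im, Complex.mul_re, Complex.mul_im, Complex.I_re, Complex.I_im,
      Complex.zero_re, Complex.zero_im, Real.cos_neg, Real.sin_neg] at h
    obtain ⟨h1, h2⟩ := h
    ring_nf at h1 h2
    have hsq := Real.sin_sq_add_cos_sq x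
    have hsqy := Real.sin_sq_add_cos_sq y
    have e1 : Real.cos y = -1 - Real.cos x := by linarith
    have e2 : Real.sin y = -Real.sin x := by linarith
    have h4 : Real.sin x ^ 2 + (-1 - Real.cos x) ^ 2 = 1 := by
      have : Real.sin x ^ 2 = Real.sin y ^ 2 := by rw [e2]; ring
      rw [this, ← e1]; exact hsqy
    have hcx : Real.cos x = -(1/2) := by nlinarith [hsq]
    have hcy : Real.cos y = -(1/2) := by rw [e1, hcx]; ring
    have h3 : Real.sin x ^ 2 = (Real.sqrt 3/2)^2 := by nlinarith [hsq]
    rcases sq_eq_sq_iff_eq_or_eq_neg.mp h3 with hx | hx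
    · exact Or.inl ⟨aux_char x hcx hx, aux_char_neg y hcy (by rw [e2, hx])⟩
    · refine Or.inr ⟨aux_char_neg x hcx hx, aux_char y hcy ?_⟩
      rw [e2, hx, neg_neg]
  · rintro (⟨⟨m, hm⟩, ⟨n, hn⟩⟩ | ⟨⟨m, hm⟩, ⟨n, hn⟩⟩) <;> subst hm <;> subst hn
    · rw [aux_exp (2*Real.pi/3) m, aux_exp (-(2*Real.pi/3)) n,
        show ((-(-(2*Real.pi/3)):ℝ):ℂ) = ((2*Real.pi/3:ℝ):ℂ) by norm_num]
      exact aux_sum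
    · rw [aux_exp (-(2*Real.pi/3)) m, aux_exp (2*Real.pi/3) n,
        show ((-(-(2*Real.pi/3)):ℝ):ℂ) = ((2*Real.pi/3:ℝ):ℂ) by norm_num]
      linear_combination aux_sum

/-- The honeycomb structure function `Ω(k) = 1 + e^{-i k·ℓ₁} + e^{-i k·ℓ₂}` vanishes
if and only if `k` is congruent, modulo the reciprocal lattice generated by
`G₁ = (2π/3)(1,-√3)` and `G₂ = (2π/3)(1,√3)`, to one of the two Fermi points
`k_F^± = (2π/3, ±2π/(3√3))`. -/
theorem haldane_fermi_points (k : ℝ × ℝ) :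
    let ℓ₁ : ℝ × ℝ := (3 / 2, -(Real.sqrt 3) / 2)
    let ℓ₂ : ℝ × ℝ := (3 / 2, Real.sqrt 3 / 2)
    let G₁ : ℝ × ℝ := (2 * Real.pi / 3, -(2 * Real.pi / 3) * Real.sqrt 3)
    let G₂ : ℝ × ℝ := (2 * Real.pi / 3, (2 * Real.pi / 3) * Real.sqrt 3)
    let kFp : ℝ × ℝ := (2 * Real.pi / 3, 2 * Real.pi / (3 * Real.sqrt 3))
    let kFm : ℝ × ℝ := (2 * Real.pi / 3, -(2 * Real.pi / (3 * Real.sqrt 3)))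
    let Ω : (ℝ × ℝ) → ℂ := fun q =>
      1 + Complex.exp (-Complex.I * ((q.1 * ℓ₁.1 + q.2 * ℓ₁.2 : ℝ) : ℂ)) +
        Complex.exp (-Complex.I * ((q.1 * ℓ₂.1 + q.2 * ℓ₂.2 : ℝ) : ℂ))
    (Ω k = 0 ↔ ∃ n₁ n₂ : ℤ,
      k = kFp + (n₁ : ℝ) • G₁ + (n₂ : ℝ) • G₂ ∨
      k = kFm + (n₁ : ℝ) • G₁ + (n₂ : ℝ) • G₂) := by
  intro ℓ₁ ℓ₂ G₁ G₂ kFp kFm Ω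
  have s3 : Real.sqrt 3 * Real.sqrt 3 = 3 := Real.mul_self_sqrt (by norm_num)
  have hrw : 2*Real.pi/(3*Real.sqrt 3) = 2*Real.pi*Real.sqrt 3/9 := by
    rw [div_eq_div_iff (by positivity) (by norm_num)]
    linear_combination (-6*Real.pi)*s3
  show (1 + Complex.exp (-Complex.I * ((k.1 * (3/2) + k.2 * (-(Real.sqrt 3)/2) : ℝ) : ℂ)) +
      Complex.exp (-Complex.I * ((k.1 * (3/2) + k.2 * (Real.sqrt 3/2) : ℝ) : ℂ)) = 0) ↔ _
  rw [aux_iff]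
  simp only [G₁, G₂, kFp, kFm, Prod.ext_iff, Prod.fst_add, Prod.snd_add, Prod.smul_fst, Prod.smul_snd,
    smul_eq_mul]
  constructor
  · rintro (⟨⟨m, hm⟩, ⟨n, hn⟩⟩ | ⟨⟨m, hm⟩, ⟨n, hn⟩⟩)
    · refine ⟨m, n - 1, Or.inl ⟨?_, ?_⟩⟩
      · push_cast; linarith
      · push_cast
        rw [hrw]
        have h2 : k.2 * Real.sqrt 3 = -(4*Real.pi/3) + 2*Real.pi*((n:ℝ) - m) := by linarith
        linear_combination (Real.sqrt 3/3)*h2 - (k.2/3)*s3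
    · refine ⟨m - 1, n, Or.inr ⟨?_, ?_⟩⟩
      · push_cast; linarith
      · push_cast
        rw [hrw]
        have h2 : k.2 * Real.sqrt 3 = 4*Real.pi/3 + 2*Real.pi*((n:ℝ) - m) := by linarith
        linear_combination (Real.sqrt 3/3)*h2 - (k.2/3)*s3
  · rintro ⟨n₁, n₂, ⟨h1, h2⟩ | ⟨h1, h2⟩⟩
    · rw [hrw] at h2
      refine Or.inl ⟨⟨n₁, ?_⟩, ⟨n₂ + 1, ?_⟩⟩
      · rw [h1, h2]; push_cast
        linear_combination (-Real.pi/9 + (n₁:ℝ)*Real.pi/3 - (n₂:ℝ)*Real.pi/3)*s3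
      · rw [h1, h2]; push_cast
        linear_combination (Real.pi/9 - (n₁:ℝ)*Real.pi/3 + (n₂:ℝ)*Real.pi/3)*s3
    · rw [hrw] at h2
      refine Or.inr ⟨⟨n₁ + 1, ?_⟩, ⟨n₂, ?_⟩⟩
      · rw [h1, h2]; push_cast
        linear_combination (Real.pi/9 + (n₁:ℝ)*Real.pi/3 - (n₂:ℝ)*Real.pi/3)*s3
      · rw [h1, h2]; push_cast
        linear_combination (-Real.pi/9 - (n₁:ℝ)*Real.pi/3 + (n₂:ℝ)*Real.pi/3)*s3
end

section
/- Let H(k) be a C¹ family of Hermitian n×n matrices on ℝ², with spectral gap around μ: the spectrum of H(k) never meets (μ−δ, μ+δ) for some δ>0. Let P₋(k) be the spectral projection of H(k) onto eigenvalues below μ and P₊ = 1 − P₋. Define, for t ≥ 0, F(t,k) = Tr( e^{tH(k)} P₋(k) (∂₁P₋)(k) e^{−tH(k)} P₊(k) (∂₂P₋)(k) ) and f(t,k) = Tr( e^{tH(k)} P₋(k) (∂₁H)(k) e^{−tH(k)} P₊(k) (∂₂H)(k) ). Then f(t,k) = ∂²_t F(t,k) for all t ≥ 0. -/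
open scoped ComplexOrder

namespace HallTraceAux

open NormedSpace

attribute [local instance] Matrix.linftyOpSemiNormedRing Matrix.linftyOpNormedRing
  Matrix.linftyOpNormedAlgebra

variable {n : Type*} [Fintype n] [DecidableEq n]

/-- `e^{tA}` as a function of real `t`. -/
noncomputable def er (A : Matrix n n ℂ) (s : ℝ) : Matrix n n ℂ := exp ((s : ℂ) • A)

lemma er_eq (A : Matrix n n ℂ) : er A = fun s : ℝ => exp (s • A) := by
  funext s
  rw [er]
  congr 1

lemma hasDerivAt_er (A : Matrix n n ℂ) (u : ℝ) :
    HasDerivAt (er A) (A * er A u) u := by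
  rw [er_eq]
  have := hasDerivAt_exp_smul_const' (𝕂 := ℝ) A u
  exact this

lemma commute_er {A B : Matrix n n ℂ} (h : Commute B A) (s : ℝ) : Commute B (er A s) :=
  (h.smul_right _).exp_right

noncomputable def traceCLM : Matrix n n ℂ →L[ℝ] ℂ :=
  LinearMap.toContinuousLinearMap (Matrix.traceLinearMap n ℝ ℂ)

omit [DecidableEq n] in
lemma traceCLM_apply (X : Matrix n n ℂ) : traceCLM X = X.trace := rfl

lemma master (A M N : Matrix n n ℂ) (u : ℝ) :
    HasDerivAt (fun s : ℝ => (er A s * M * er A (-s) * N).trace)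
      ((er A u * (A * M - M * A) * er A (-u) * N).trace) u := by
  have c1 : A * er A u = er A u * A := (commute_er (Commute.refl A) u).eq
  have c2 : A * er A (-u) = er A (-u) * A := (commute_er (Commute.refl A) (-u)).eq
  have h1 : HasDerivAt (fun s : ℝ => er A s * M) (A * er A u * M) u :=
    (hasDerivAt_er A u).mul_const M
  have h2 : HasDerivAt (fun s : ℝ => er A (-s)) (-(A * er A (-u))) u := by
    have := HasDerivAt.scomp u (hasDerivAt_er A (-u)) (hasDerivAt_neg u)
    simp only [Function.comp_def, neg_smul, one_smul] at this
    exact this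
  have h4 := (h1.mul h2).mul_const N
  have h5 := (traceCLM (n := n)).hasFDerivAt.comp_hasDerivAt u h4
  have h6 : HasDerivAt (fun s : ℝ => (er A s * M * er A (-s) * N).trace)
      (traceCLM ((A * er A u * M * er A (-u) + er A u * M * -(A * er A (-u))) * N)) u := h5
  rw [traceCLM_apply] at h6
  convert h6 using 2
  rw [c1]
  noncomm_ring

lemma dmul (U V : (ℝ × ℝ) → Matrix n n ℂ)
    (hU : ∀ i j, ContDiff ℝ 1 fun k => U k i j) (hV : ∀ i j, ContDiff ℝ 1 fun k => V k i j)
    (k e : ℝ × ℝ) :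
    (Matrix.of fun i j => fderiv ℝ (fun k' => (U k' * V k') i j) k e) =
      (Matrix.of fun i j => fderiv ℝ (fun k' => U k' i j) k e) * V k +
        U k * (Matrix.of fun i j => fderiv ℝ (fun k' => V k' i j) k e) := by
  ext i j
  have hdU : ∀ a b, HasFDerivAt (fun k' => U k' a b) (fderiv ℝ (fun k' => U k' a b) k) k :=
    fun a b => (((hU a b).differentiable one_ne_zero) k).hasFDerivAt
  have hdV : ∀ a b, HasFDerivAt (fun k' => V k' a b) (fderiv ℝ (fun k' => V k' a b) k) k :=
    fun a b => (((hV a b).differentiable one_ne_zero) k).hasFDerivAt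
  have hsum : HasFDerivAt (fun k' => (U k' * V k') i j)
      (∑ l, (U k i l • fderiv ℝ (fun k' => V k' l j) k +
        V k l j • fderiv ℝ (fun k' => U k' i l) k)) k := by
    have hfun : (fun k' => (U k' * V k') i j) = fun k' => ∑ l, U k' i l * V k' l j := by
      funext k'; simp [Matrix.mul_apply]
    rw [hfun]
    exact HasFDerivAt.fun_sum fun l _ => (hdU i l).mul (hdV l j)
  have hfd := hsum.fderiv
  show (fderiv ℝ (fun k' => (U k' * V k') i j) k) e = _
  rw [hfd]
  simp only [Matrix.add_apply, Matrix.mul_apply, Matrix.of_apply,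
    ContinuousLinearMap.sum_apply, ContinuousLinearMap.add_apply,
    ContinuousLinearMap.coe_smul', Pi.smul_apply, smul_eq_mul]
  rw [← Finset.sum_add_distrib]
  exact Finset.sum_congr rfl fun l _ => by ring

lemma key_alg (A Pm E E' A₁ A₂ B₁ B₂ : Matrix n n ℂ)
    (hP2 : Pm * Pm = Pm)
    (hAPc : A * Pm = Pm * A)
    (hEPc : E * Pm = Pm * E) (hE'Pc : E' * Pm = Pm * E')
    (hAEc : A * E = E * A) (hAE'c : A * E' = E' * A)
    (hh1 : B₁ * Pm + A * A₁ = A₁ * A + Pm * B₁)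
    (hh2 : B₂ * Pm + A * A₂ = A₂ * A + Pm * B₂) :
    (E * (Pm * B₁) * E' * ((1 - Pm) * B₂)).trace =
      (E * (A * (A * (Pm * A₁) - Pm * A₁ * A) - (A * (Pm * A₁) - Pm * A₁ * A) * A) * E' *
        ((1 - Pm) * A₂)).trace := by
  set Q : Matrix n n ℂ := 1 - Pm with hQdef
  have assoc_comm : ∀ {X Y : Matrix n n ℂ}, X * Y = Y * X →
      ∀ Z : Matrix n n ℂ, X * (Y * Z) = Y * (X * Z) := by
    intro X Y h Z; rw [← mul_assoc, h, mul_assoc]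
  have rPP : Pm * Pm = Pm := hP2
  have rPP' : ∀ Z : Matrix n n ℂ, Pm * (Pm * Z) = Pm * Z := fun Z => by
    rw [← mul_assoc, hP2]
  have rPQ : Pm * Q = 0 := by rw [hQdef, mul_sub, mul_one, hP2, sub_self]
  have rPQ' : ∀ Z : Matrix n n ℂ, Pm * (Q * Z) = 0 := fun Z => by
    rw [← mul_assoc, rPQ, zero_mul]
  have rQP : Q * Pm = 0 := by rw [hQdef, sub_mul, one_mul, hP2, sub_self]
  have rQP' : ∀ Z : Matrix n n ℂ, Q * (Pm * Z) = 0 := fun Z => by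
    rw [← mul_assoc, rQP, zero_mul]
  have rQQ : Q * Q = Q := by
    rw [hQdef, mul_sub, mul_one, sub_mul, one_mul, hP2]; abel
  have rQQ' : ∀ Z : Matrix n n ℂ, Q * (Q * Z) = Q * Z := fun Z => by
    rw [← mul_assoc, rQQ]
  have rEP : E * Pm = Pm * E := hEPc
  have rEP' := assoc_comm rEP
  have rE'P : E' * Pm = Pm * E' := hE'Pc
  have rE'P' := assoc_comm rE'P
  have rEQ : E * Q = Q * E := by
    rw [hQdef, mul_sub, mul_one, sub_mul, one_mul, hEPc]
  have rEQ' := assoc_comm rEQ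
  have rE'Q : E' * Q = Q * E' := by
    rw [hQdef, mul_sub, mul_one, sub_mul, one_mul, hE'Pc]
  have rE'Q' := assoc_comm rE'Q
  have rAP : A * Pm = Pm * A := hAPc
  have rAP' := assoc_comm rAP
  have rAQ : A * Q = Q * A := by
    rw [hQdef, mul_sub, mul_one, sub_mul, one_mul, hAPc]
  have rAQ' := assoc_comm rAQ
  have rAE : A * E = E * A := hAEc
  have rAE' := assoc_comm rAE
  have rAE2 : A * E' = E' * A := hAE'c
  have rAE2' := assoc_comm rAE2
  -- sandwich lemma: insert `Q` after the left slot and `Pm` after the right slot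
  have hsw : ∀ U V : Matrix n n ℂ,
      (E * (Pm * U) * E' * (Q * V)).trace
        = (E * (Pm * (U * Q)) * E' * (Q * (V * Pm))).trace := by
    intro U V
    have l1 : E * (Pm * U) * E' * (Q * V) = Pm * (E * (U * (Q * (E' * V)))) := by
      simp only [mul_assoc, rPQ, rPQ', rQP, rQP', rPP, rPP', rQQ, rQQ', rEP, rEP', rE'P, rE'P', rEQ, rEQ', rE'Q, rE'Q', rAP, rAP', rAQ, rAQ', rAE, rAE2, rAE', rAE2', zero_mul, mul_zero, add_zero, zero_add, mul_add, add_mul, mul_sub, sub_mul]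
    have l2 : E * (Pm * (U * Q)) * E' * (Q * (V * Pm))
        = Pm * (E * (U * (Q * (E' * V)))) * Pm := by
      simp only [mul_assoc, rPQ, rPQ', rQP, rQP', rPP, rPP', rQQ, rQQ', rEP, rEP', rE'P, rE'P', rEQ, rEQ', rE'Q, rE'Q', rAP, rAP', rAQ, rAQ', rAE, rAE2, rAE', rAE2', zero_mul, mul_zero, add_zero, zero_add, mul_add, add_mul, mul_sub, sub_mul]
    rw [l1, l2]
    conv_rhs => rw [Matrix.trace_mul_comm]
    rw [rPP']
  -- move a leading `A` in the left slot to a trailing `A` in the right slot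
  have TmoveL : ∀ U V : Matrix n n ℂ,
      (E * (Pm * ((A * U) * Q)) * E' * (Q * (V * Pm))).trace
        = (E * (Pm * (U * Q)) * E' * (Q * ((V * A) * Pm))).trace := by
    intro U V
    have l1 : E * (Pm * ((A * U) * Q)) * E' * (Q * (V * Pm))
        = A * (Pm * (E * (U * (Q * (E' * (V * Pm)))))) := by
      simp only [mul_assoc, rPQ, rPQ', rQP, rQP', rPP, rPP', rQQ, rQQ', rEP, rEP', rE'P, rE'P', rEQ, rEQ', rE'Q, rE'Q', rAP, rAP', rAQ, rAQ', rAE, rAE2, rAE', rAE2', zero_mul, mul_zero, add_zero, zero_add, mul_add, add_mul, mul_sub, sub_mul]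
    have l2 : E * (Pm * (U * Q)) * E' * (Q * ((V * A) * Pm))
        = Pm * (E * (U * (Q * (E' * (V * Pm))))) * A := by
      simp only [mul_assoc, rPQ, rPQ', rQP, rQP', rPP, rPP', rQQ, rQQ', rEP, rEP', rE'P, rE'P', rEQ, rEQ', rE'Q, rE'Q', rAP, rAP', rAQ, rAQ', rAE, rAE2, rAE', rAE2', zero_mul, mul_zero, add_zero, zero_add, mul_add, add_mul, mul_sub, sub_mul]
    rw [l1, l2, Matrix.trace_mul_comm]
  -- move a trailing `A` in the left slot to a leading `A` in the right slot
  have TmoveR : ∀ U V : Matrix n n ℂ,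
      (E * (Pm * ((U * A) * Q)) * E' * (Q * (V * Pm))).trace
        = (E * (Pm * (U * Q)) * E' * (Q * ((A * V) * Pm))).trace := by
    intro U V
    exact congrArg Matrix.trace (by simp only [mul_assoc, rPQ, rPQ', rQP, rQP', rPP, rPP', rQQ, rQQ', rEP, rEP', rE'P, rE'P', rEQ, rEQ', rE'Q, rE'Q', rAP, rAP', rAQ, rAQ', rAE, rAE2, rAE', rAE2', zero_mul, mul_zero, add_zero, zero_add, mul_add, add_mul, mul_sub, sub_mul])
  -- subtraction linearity in each slot
  have hTsubL : ∀ U U' V : Matrix n n ℂ,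
      (E * (Pm * (U * Q)) * E' * (Q * (V * Pm))).trace
        - (E * (Pm * (U' * Q)) * E' * (Q * (V * Pm))).trace
        = (E * (Pm * ((U - U') * Q)) * E' * (Q * (V * Pm))).trace := by
    intro U U' V
    rw [← Matrix.trace_sub]
    exact congrArg Matrix.trace (by noncomm_ring)
  have hTsubR : ∀ U V V' : Matrix n n ℂ,
      (E * (Pm * (U * Q)) * E' * (Q * (V * Pm))).trace
        - (E * (Pm * (U * Q)) * E' * (Q * (V' * Pm))).trace
        = (E * (Pm * (U * Q)) * E' * (Q * ((V - V') * Pm))).trace := by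
    intro U V V'
    rw [← Matrix.trace_sub]
    exact congrArg Matrix.trace (by noncomm_ring)
  -- the two derivative identities, sandwiched
  have hslot1 : Pm * ((A * A₁ - A₁ * A) * Q) = Pm * (B₁ * Q) := by
    have h := congrArg (fun X => Pm * (X * Q)) hh1
    simp only [mul_assoc, rPQ, rPQ', rQP, rQP', rPP, rPP', rQQ, rQQ', rEP, rEP', rE'P, rE'P', rEQ, rEQ', rE'Q, rE'Q', rAP, rAP', rAQ, rAQ', rAE, rAE2, rAE', rAE2', zero_mul, mul_zero, add_zero, zero_add, mul_add, add_mul, mul_sub, sub_mul] at h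
    simp only [mul_assoc, rPQ, rPQ', rQP, rQP', rPP, rPP', rQQ, rQQ', rEP, rEP', rE'P, rE'P', rEQ, rEQ', rE'Q, rE'Q', rAP, rAP', rAQ, rAQ', rAE, rAE2, rAE', rAE2', zero_mul, mul_zero, add_zero, zero_add, mul_add, add_mul, mul_sub, sub_mul]
    rw [h]
    abel
  have hslot2 : Q * ((A₂ * A - A * A₂) * Pm) = Q * (B₂ * Pm) := by
    have h := congrArg (fun X => Q * (X * Pm)) hh2
    simp only [mul_assoc, rPQ, rPQ', rQP, rQP', rPP, rPP', rQQ, rQQ', rEP, rEP', rE'P, rE'P', rEQ, rEQ', rE'Q, rE'Q', rAP, rAP', rAQ, rAQ', rAE, rAE2, rAE', rAE2', zero_mul, mul_zero, add_zero, zero_add, mul_add, add_mul, mul_sub, sub_mul] at h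
    simp only [mul_assoc, rPQ, rPQ', rQP, rQP', rPP, rPP', rQQ, rQQ', rEP, rEP', rE'P, rE'P', rEQ, rEQ', rE'Q, rE'Q', rAP, rAP', rAQ, rAQ', rAE, rAE2, rAE', rAE2', zero_mul, mul_zero, add_zero, zero_add, mul_add, add_mul, mul_sub, sub_mul]
    rw [← h]
    abel
  -- conversion of the four raw second-derivative terms to sandwiched form
  have c1 : (E * (A * (A * (Pm * A₁))) * E' * (Q * A₂)).trace
      = (E * (Pm * ((A * (A * A₁)) * Q)) * E' * (Q * (A₂ * Pm))).trace :=
    (congrArg Matrix.trace (show E * (A * (A * (Pm * A₁))) * E' * (Q * A₂)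
      = E * (Pm * (A * (A * A₁))) * E' * (Q * A₂) by simp only [mul_assoc, rPQ, rPQ', rQP, rQP', rPP, rPP', rQQ, rQQ', rEP, rEP', rE'P, rE'P', rEQ, rEQ', rE'Q, rE'Q', rAP, rAP', rAQ, rAQ', rAE, rAE2, rAE', rAE2', zero_mul, mul_zero, add_zero, zero_add, mul_add, add_mul, mul_sub, sub_mul])).trans
      (hsw (A * (A * A₁)) A₂)
  have c2 : (E * (A * (Pm * A₁ * A)) * E' * (Q * A₂)).trace
      = (E * (Pm * ((A * (A₁ * A)) * Q)) * E' * (Q * (A₂ * Pm))).trace :=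
    (congrArg Matrix.trace (show E * (A * (Pm * A₁ * A)) * E' * (Q * A₂)
      = E * (Pm * (A * (A₁ * A))) * E' * (Q * A₂) by simp only [mul_assoc, rPQ, rPQ', rQP, rQP', rPP, rPP', rQQ, rQQ', rEP, rEP', rE'P, rE'P', rEQ, rEQ', rE'Q, rE'Q', rAP, rAP', rAQ, rAQ', rAE, rAE2, rAE', rAE2', zero_mul, mul_zero, add_zero, zero_add, mul_add, add_mul, mul_sub, sub_mul])).trans
      (hsw (A * (A₁ * A)) A₂)
  have c3 : (E * (A * (Pm * A₁) * A) * E' * (Q * A₂)).trace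
      = (E * (Pm * (((A * A₁) * A) * Q)) * E' * (Q * (A₂ * Pm))).trace :=
    (congrArg Matrix.trace (show E * (A * (Pm * A₁) * A) * E' * (Q * A₂)
      = E * (Pm * ((A * A₁) * A)) * E' * (Q * A₂) by simp only [mul_assoc, rPQ, rPQ', rQP, rQP', rPP, rPP', rQQ, rQQ', rEP, rEP', rE'P, rE'P', rEQ, rEQ', rE'Q, rE'Q', rAP, rAP', rAQ, rAQ', rAE, rAE2, rAE', rAE2', zero_mul, mul_zero, add_zero, zero_add, mul_add, add_mul, mul_sub, sub_mul])).trans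
      (hsw ((A * A₁) * A) A₂)
  have c4 : (E * (Pm * A₁ * A * A) * E' * (Q * A₂)).trace
      = (E * (Pm * (((A₁ * A) * A) * Q)) * E' * (Q * (A₂ * Pm))).trace :=
    (congrArg Matrix.trace (show E * (Pm * A₁ * A * A) * E' * (Q * A₂)
      = E * (Pm * ((A₁ * A) * A)) * E' * (Q * A₂) by simp only [mul_assoc, rPQ, rPQ', rQP, rQP', rPP, rPP', rQQ, rQQ', rEP, rEP', rE'P, rE'P', rEQ, rEQ', rE'Q, rE'Q', rAP, rAP', rAQ, rAQ', rAE, rAE2, rAE', rAE2', zero_mul, mul_zero, add_zero, zero_add, mul_add, add_mul, mul_sub, sub_mul])).trans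
      (hsw ((A₁ * A) * A) A₂)
  -- assemble
  calc (E * (Pm * B₁) * E' * (Q * B₂)).trace
      = (E * (Pm * (B₁ * Q)) * E' * (Q * (B₂ * Pm))).trace := hsw B₁ B₂
    _ = (E * (Pm * (B₁ * Q)) * E' * (Q * ((A₂ * A - A * A₂) * Pm))).trace := by
        rw [hslot2]
    _ = (E * (Pm * (B₁ * Q)) * E' * (Q * ((A₂ * A) * Pm))).trace
        - (E * (Pm * (B₁ * Q)) * E' * (Q * ((A * A₂) * Pm))).trace := (hTsubR _ _ _).symm
    _ = ((E * (Pm * ((A * A₁) * Q)) * E' * (Q * ((A₂ * A) * Pm))).trace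
          - (E * (Pm * ((A₁ * A) * Q)) * E' * (Q * ((A₂ * A) * Pm))).trace)
        - ((E * (Pm * ((A * A₁) * Q)) * E' * (Q * ((A * A₂) * Pm))).trace
          - (E * (Pm * ((A₁ * A) * Q)) * E' * (Q * ((A * A₂) * Pm))).trace) := by
        rw [hTsubL, hTsubL, hslot1]
    _ = ((E * (Pm * ((A * (A * A₁)) * Q)) * E' * (Q * (A₂ * Pm))).trace
          - (E * (Pm * ((A * (A₁ * A)) * Q)) * E' * (Q * (A₂ * Pm))).trace)
        - ((E * (Pm * (((A * A₁) * A) * Q)) * E' * (Q * (A₂ * Pm))).trace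
          - (E * (Pm * (((A₁ * A) * A) * Q)) * E' * (Q * (A₂ * Pm))).trace) := by
        rw [TmoveL (A * A₁) A₂, TmoveL (A₁ * A) A₂, TmoveR (A * A₁) A₂, TmoveR (A₁ * A) A₂]
    _ = (E * (A * (A * (Pm * A₁) - Pm * A₁ * A) - (A * (Pm * A₁) - Pm * A₁ * A) * A) * E' *
          (Q * A₂)).trace := by
        rw [show E * (A * (A * (Pm * A₁) - Pm * A₁ * A) - (A * (Pm * A₁) - Pm * A₁ * A) * A)
              * E' * (Q * A₂)
            = E * (A * (A * (Pm * A₁))) * E' * (Q * A₂)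
              - E * (A * (Pm * A₁ * A)) * E' * (Q * A₂)
              - (E * (A * (Pm * A₁) * A) * E' * (Q * A₂)
                - E * (Pm * A₁ * A * A) * E' * (Q * A₂)) from by noncomm_ring,
          Matrix.trace_sub, Matrix.trace_sub, Matrix.trace_sub, c1, c2, c3, c4]

end HallTraceAux

open HallTraceAux

/-- The key identity in the evaluation of the non-interacting Hall conductivity:
for a `C¹` family `H(k)` of Hermitian matrices with a spectral gap `(μ-δ, μ+δ)` and
spectral projection `P₋(k)` onto the eigenvalues below `μ` (characterized by
`P₋` Hermitian idempotent commuting with `H`, `H P₋ ≤ (μ-δ)P₋` and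
`H(1-P₋) ≥ (μ+δ)(1-P₋)`), the functions
`F(t,k) = Tr(e^{tH}P₋(∂₁P₋)e^{-tH}P₊(∂₂P₋))` and
`f(t,k) = Tr(e^{tH}P₋(∂₁H)e^{-tH}P₊(∂₂H))` satisfy `f = ∂ₜ²F` for `t ≥ 0`. -/
theorem hall_trace_identity {n : Type*} [Fintype n] [DecidableEq n]
    (H P : (ℝ × ℝ) → Matrix n n ℂ) (μ δ : ℝ) (hδ : 0 < δ)
    (hHC1 : ∀ i j : n, ContDiff ℝ 1 fun k => H k i j)
    (hPC1 : ∀ i j : n, ContDiff ℝ 1 fun k => P k i j)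
    (hHerm : ∀ k, (H k).IsHermitian) (hPHerm : ∀ k, (P k).IsHermitian)
    (hproj : ∀ k, P k * P k = P k)
    (hcomm : ∀ k, H k * P k = P k * H k)
    (hbelow : ∀ k, (((μ - δ : ℝ) : ℂ) • P k - H k * P k).PosSemidef)
    (habove : ∀ k, (H k * (1 - P k) - ((μ + δ : ℝ) : ℂ) • (1 - P k)).PosSemidef) :
    let dP : (ℝ × ℝ) → (ℝ × ℝ) → Matrix n n ℂ := fun k e =>
      Matrix.of fun i j => fderiv ℝ (fun k' => P k' i j) k e
    let dH : (ℝ × ℝ) → (ℝ × ℝ) → Matrix n n ℂ := fun k e =>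
      Matrix.of fun i j => fderiv ℝ (fun k' => H k' i j) k e
    let F : ℝ → (ℝ × ℝ) → ℂ := fun t k =>
      (NormedSpace.exp ((t : ℂ) • H k) * P k * dP k (1, 0) *
        NormedSpace.exp ((-t : ℂ) • H k) * (1 - P k) * dP k (0, 1)).trace
    let f : ℝ → (ℝ × ℝ) → ℂ := fun t k =>
      (NormedSpace.exp ((t : ℂ) • H k) * P k * dH k (1, 0) *
        NormedSpace.exp ((-t : ℂ) • H k) * (1 - P k) * dH k (0, 1)).trace
    ∀ (k : ℝ × ℝ) (t : ℝ), 0 ≤ t →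
      f t k = deriv (fun s => deriv (fun u => F u k) s) t := by
  intro dP dH F f k t ht
  -- the commutation facts for the exponentials
  have hPA : Commute (P k) (H k) := (Commute.symm (hcomm k))
  have hEPc : er (H k) t * P k = P k * er (H k) t := ((commute_er hPA t).symm).eq
  have hE'Pc : er (H k) (-t) * P k = P k * er (H k) (-t) := ((commute_er hPA (-t)).symm).eq
  have hAEc : H k * er (H k) t = er (H k) t * H k := (commute_er (Commute.refl (H k)) t).eq
  have hAE'c : H k * er (H k) (-t) = er (H k) (-t) * H k :=
    (commute_er (Commute.refl (H k)) (-t)).eq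
  -- the differentiated commutation relation  d(HP) = d(PH)
  have hhd : ∀ e : ℝ × ℝ, dH k e * P k + H k * dP k e = dP k e * H k + P k * dH k e := by
    intro e
    have h1 := dmul H P hHC1 hPC1 k e
    have h2 := dmul P H hPC1 hHC1 k e
    have key : (Matrix.of fun i j => fderiv ℝ (fun k' => H k' i j) k e) * P k +
        H k * (Matrix.of fun i j => fderiv ℝ (fun k' => P k' i j) k e) =
        (Matrix.of fun i j => fderiv ℝ (fun k' => P k' i j) k e) * H k +
        P k * (Matrix.of fun i j => fderiv ℝ (fun k' => H k' i j) k e) := by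
      rw [← h1, ← h2]
      congr 1
      funext i j
      have hfun : (fun k' : ℝ × ℝ => (H k' * P k') i j) = fun k' : ℝ × ℝ => (P k' * H k') i j := by
        funext k'
        rw [hcomm k']
      rw [hfun]
    exact key
  -- rewrite `F` in terms of `er`
  have hF : (fun u : ℝ => F u k) = fun u : ℝ =>
      (er (H k) u * (P k * dP k (1, 0)) * er (H k) (-u) * ((1 - P k) * dP k (0, 1))).trace := by
    funext u
    show (NormedSpace.exp ((u : ℂ) • H k) * P k * dP k (1, 0) *
        NormedSpace.exp ((-u : ℂ) • H k) * (1 - P k) * dP k (0, 1)).trace = _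
    simp only [er, Complex.ofReal_neg, mul_assoc]
  have hfk : f t k =
      (er (H k) t * (P k * dH k (1, 0)) * er (H k) (-t) * ((1 - P k) * dH k (0, 1))).trace := by
    show (NormedSpace.exp ((t : ℂ) • H k) * P k * dH k (1, 0) *
        NormedSpace.exp ((-t : ℂ) • H k) * (1 - P k) * dH k (0, 1)).trace = _
    simp only [er, Complex.ofReal_neg, mul_assoc]
  -- first t-derivative
  have hMaster1 : (fun s : ℝ => deriv (fun u : ℝ => F u k) s) = fun s : ℝ =>
      (er (H k) s * (H k * (P k * dP k (1, 0)) - P k * dP k (1, 0) * H k) *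
        er (H k) (-s) * ((1 - P k) * dP k (0, 1))).trace := by
    funext s
    rw [hF]
    exact (master (H k) (P k * dP k (1, 0)) ((1 - P k) * dP k (0, 1)) s).deriv
  -- second t-derivative
  have hfin := (master (H k) (H k * (P k * dP k (1, 0)) - P k * dP k (1, 0) * H k)
      ((1 - P k) * dP k (0, 1)) t).deriv
  rw [hMaster1, hfin, hfk]
  exact key_alg (H k) (P k) (er (H k) t) (er (H k) (-t)) (dP k (1, 0)) (dP k (0, 1))
    (dH k (1, 0)) (dH k (0, 1)) (hproj k) (hcomm k) hEPc hE'Pc hAEc hAE'c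
    (hhd (1, 0)) (hhd (0, 1))
end

section
/- Let τ be a finite rooted tree with root at level h and N ≥ 1 leaves (endpoints); for each internal vertex v let s_v be its number of children, h_v its level (the root's unique child v₀ has level h+1, and children have level one more than their parent), n(v) the number of leaves descending from v, and for v ≠ v₀ let v' denote the parent of v. Then Σ_{v internal} h_v(s_v − 1) = h(N − 1) + Σ_{v internal} (h_v − h_{v'})(n(v) − 1), where for v = v₀ we set h_{v'} = h. -/
open Finset

/-- The scale-counting identity for Gallavotti–Nicolò trees: for a finite rooted
tree with root at level `h` (the root itself excluded from the vertex type `V`;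
the unique vertex with no parent is the root's child `v₀`, at level `h+1`),
with `s v` the number of children of `v`, `n v` the number of leaves descending
from `v`, and `lvl v` the level of `v`, one has
`Σ_{v internal} lvl v · (s v - 1) = h·(N-1) + Σ_{v internal} (lvl v - lvl v')·(n v - 1)`,
where `v'` is the parent of `v` (with `lvl v' := h` for `v = v₀`) and `N` is the
total number of leaves. -/
theorem tree_scale_identity {V : Type*} [Fintype V] [DecidableEq V]
    (h : ℤ) (parent : V → Option V) (lvl : V → ℤ) (s n : V → ℕ) (N : ℕ)
    (hlvl : ∀ v w : V, parent v = some w → lvl v = lvl w + 1)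
    (hroot : ∃! v : V, parent v = none)
    (hrootlvl : ∀ v : V, parent v = none → lvl v = h + 1)
    (hs : ∀ v : V, s v = (univ.filter fun w => parent w = some v).card)
    (hn_leaf : ∀ v : V, s v = 0 → n v = 1)
    (hn_int : ∀ v : V, s v ≠ 0 →
      n v = ∑ w ∈ univ.filter (fun w => parent w = some v), n w)
    (hN : N = (univ.filter fun v : V => s v = 0).card) (hN1 : 1 ≤ N) :
    ∑ v ∈ univ.filter (fun v : V => s v ≠ 0), lvl v * ((s v : ℤ) - 1) =
      h * ((N : ℤ) - 1) +
        ∑ v ∈ univ.filter (fun v : V => s v ≠ 0),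
          (lvl v - (parent v).elim h lvl) * ((n v : ℤ) - 1) := by
  classical
  obtain ⟨v₀, hv₀, hv₀u⟩ := hroot
  set I : Finset V := univ.filter (fun v : V => s v ≠ 0) with hIdef
  set L : Finset V := univ.filter (fun v : V => s v = 0) with hLdef
  set P : Finset V := univ.filter (fun w : V => parent w ≠ none) with hPdef
  -- every vertex with a parent has an internal parent
  have hpar_int : ∀ w v : V, parent w = some v → v ∈ I := by
    intro w v hw
    simp only [hIdef, mem_filter, mem_univ, true_and]
    intro h0
    rw [hs v, Finset.card_eq_zero] at h0
    have hmem : w ∈ univ.filter (fun x => parent x = some v) := by simp [hw]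
    rw [h0] at hmem
    exact absurd hmem (Finset.notMem_empty w)
  -- fiberwise summation over parents
  have hfib : ∀ g : V → ℤ,
      (∑ v ∈ I, ∑ w ∈ univ.filter (fun w => parent w = some v), g w)
        = ∑ w ∈ P, g w := by
    intro g
    have hmap : ∀ w ∈ P, (parent w).getD w ∈ I := by
      intro w hw
      simp only [hPdef, mem_filter, mem_univ, true_and] at hw
      obtain ⟨u, hu⟩ := Option.ne_none_iff_exists'.mp hw
      rw [hu]
      exact hpar_int w u hu
    rw [← Finset.sum_fiberwise_of_maps_to hmap g]
    refine Finset.sum_congr rfl fun v hv => ?_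
    refine Finset.sum_congr ?_ fun _ _ => rfl
    ext w
    simp only [hPdef, mem_filter, mem_univ, true_and]
    constructor
    · intro hw
      rw [hw]
      exact ⟨by simp, rfl⟩
    · rintro ⟨hne, hgd⟩
      obtain ⟨u, hu⟩ := Option.ne_none_iff_exists'.mp hne
      rw [hu] at hgd
      simp only [Option.getD_some] at hgd
      rw [hu, hgd]
  -- splitting off the root
  have hnone : univ.filter (fun w : V => parent w = none) = {v₀} := by
    ext w
    simp only [mem_filter, mem_univ, true_and, mem_singleton]
    exact ⟨fun hw => hv₀u w hw, fun hw => hw ▸ hv₀⟩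
  have hsplit : ∀ g : V → ℤ, (∑ w, g w) = g v₀ + ∑ w ∈ P, g w := by
    intro g
    rw [← Finset.sum_filter_add_sum_filter_not univ (fun w : V => parent w = none) g,
      hnone, Finset.sum_singleton]
  -- splitting into internal vertices and leaves
  have hsplit2 : ∀ g : V → ℤ, (∑ w, g w) = (∑ w ∈ I, g w) + ∑ w ∈ L, g w := by
    intro g
    rw [← Finset.sum_filter_add_sum_filter_not univ (fun v : V => s v = 0) g, add_comm]
  have hlvlv₀ : lvl v₀ = h + 1 := hrootlvl v₀ hv₀
  have hcardL : (L.card : ℤ) = (N : ℤ) := by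
    rw [hN]
  have hcardV : ((Fintype.card V : ℤ)) = (I.card : ℤ) + (N : ℤ) := by
    have h1 := hsplit2 (fun _ => (1 : ℤ))
    simp only [Finset.sum_const, nsmul_eq_mul, mul_one, Finset.card_univ] at h1
    rw [← hcardL]
    exact_mod_cast h1
  -- E1 : ∑_I lvl v * s v = ∑_all lvl - |V| - h
  have hE1 : ∑ v ∈ I, lvl v * (s v : ℤ)
      = (∑ w, lvl w) - (Fintype.card V : ℤ) - h := by
    have step : ∑ v ∈ I, lvl v * (s v : ℤ) = ∑ w ∈ P, (lvl w - 1) := by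
      rw [← hfib (fun w => lvl w - 1)]
      refine Finset.sum_congr rfl fun v hv => ?_
      calc lvl v * (s v : ℤ)
          = ∑ w ∈ univ.filter (fun w => parent w = some v), lvl v := by
            rw [Finset.sum_const, ← hs v, nsmul_eq_mul, mul_comm]
        _ = ∑ w ∈ univ.filter (fun w => parent w = some v), (lvl w - 1) := by
            refine Finset.sum_congr rfl fun w hw => ?_
            have := hlvl w v (by simpa using (Finset.mem_filter.mp hw).2)
            linarith
    rw [step]
    have h1 := hsplit (fun w => lvl w - 1)
    have h2 : ∑ w, (lvl w - 1) = (∑ w, lvl w) - (Fintype.card V : ℤ) := by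
      rw [Finset.sum_sub_distrib, Finset.sum_const, Finset.card_univ, nsmul_eq_mul, mul_one]
    linarith [h1, h2, hlvlv₀]
  -- E2 : ∑_I n v = ∑_all n - n v₀
  have hE2 : ∑ v ∈ I, (n v : ℤ) = (∑ w, (n w : ℤ)) - (n v₀ : ℤ) := by
    have step : ∑ v ∈ I, (n v : ℤ) = ∑ w ∈ P, (n w : ℤ) := by
      rw [← hfib (fun w => (n w : ℤ))]
      refine Finset.sum_congr rfl fun v hv => ?_
      have hvI : s v ≠ 0 := by
        simpa only [hIdef, mem_filter, mem_univ, true_and] using hv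
      rw [hn_int v hvI]
      push_cast
      rfl
    rw [step]
    have := hsplit (fun w => (n w : ℤ))
    linarith
  -- leaves have n = 1
  have hLn : ∑ w ∈ L, (n w : ℤ) = (N : ℤ) := by
    have : ∑ w ∈ L, (n w : ℤ) = ∑ w ∈ L, (1 : ℤ) := by
      refine Finset.sum_congr rfl fun w hw => ?_
      have hw0 : s w = 0 := by
        simpa only [hLdef, mem_filter, mem_univ, true_and] using hw
      rw [hn_leaf w hw0]
      norm_num
    rw [this, Finset.sum_const, nsmul_eq_mul, mul_one, hcardL]
  -- n v₀ = N
  have hnv₀ : (n v₀ : ℤ) = (N : ℤ) := by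
    have := hsplit2 (fun w => (n w : ℤ))
    rw [hLn] at this
    linarith [hE2]
  -- E4 : ∑_I lvl v * n v = (∑_all lvl*n) - ∑_all n - h * N
  have hE4 : ∑ v ∈ I, lvl v * (n v : ℤ)
      = (∑ w, lvl w * (n w : ℤ)) - (∑ w, (n w : ℤ)) - h * (N : ℤ) := by
    have step : ∑ v ∈ I, lvl v * (n v : ℤ) = ∑ w ∈ P, (lvl w - 1) * (n w : ℤ) := by
      rw [← hfib (fun w => (lvl w - 1) * (n w : ℤ))]
      refine Finset.sum_congr rfl fun v hv => ?_
      have hvI : s v ≠ 0 := by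
        simpa only [hIdef, mem_filter, mem_univ, true_and] using hv
      calc lvl v * (n v : ℤ)
          = ∑ w ∈ univ.filter (fun w => parent w = some v), lvl v * (n w : ℤ) := by
            rw [← Finset.mul_sum, hn_int v hvI]
            push_cast
            rfl
        _ = ∑ w ∈ univ.filter (fun w => parent w = some v), (lvl w - 1) * (n w : ℤ) := by
            refine Finset.sum_congr rfl fun w hw => ?_
            have := hlvl w v (by simpa using (Finset.mem_filter.mp hw).2)
            rw [this]
            ring
    rw [step]
    have h1 := hsplit (fun w => (lvl w - 1) * (n w : ℤ))
    have h2 : ∑ w, (lvl w - 1) * (n w : ℤ)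
        = (∑ w, lvl w * (n w : ℤ)) - (∑ w, (n w : ℤ)) := by
      rw [← Finset.sum_sub_distrib]
      refine Finset.sum_congr rfl fun w _ => by ring
    rw [h2] at h1
    rw [hlvlv₀] at h1
    have : ((h + 1) - 1) * (n v₀ : ℤ) = h * (N : ℤ) := by rw [hnv₀]; ring
    linarith
  -- ∑_all lvl*n = ∑_I lvl*n + ∑_L lvl (since n = 1 on leaves)
  have hE5 : (∑ w, lvl w * (n w : ℤ))
      = (∑ v ∈ I, lvl v * (n v : ℤ)) + ∑ w ∈ L, lvl w := by
    rw [hsplit2 (fun w => lvl w * (n w : ℤ))]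
    congr 1
    refine Finset.sum_congr rfl fun w hw => ?_
    have hw0 : s w = 0 := by
      simpa only [hLdef, mem_filter, mem_univ, true_and] using hw
    rw [hn_leaf w hw0]
    norm_num
  -- consequence: ∑_all n = ∑_L lvl - h * N
  have hC : (∑ w, (n w : ℤ)) = (∑ w ∈ L, lvl w) - h * (N : ℤ) := by
    have := hE4
    rw [hE5] at this
    linarith
  -- split of ∑ lvl
  have hAsplit : (∑ w, lvl w) = (∑ v ∈ I, lvl v) + ∑ w ∈ L, lvl w :=
    hsplit2 lvl
  -- rewrite the RHS factor: levels increase by exactly one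
  have hone : ∑ v ∈ I, (lvl v - (parent v).elim h lvl) * ((n v : ℤ) - 1)
      = ∑ v ∈ I, ((n v : ℤ) - 1) := by
    refine Finset.sum_congr rfl fun v hv => ?_
    have : lvl v - (parent v).elim h lvl = 1 := by
      cases hp : parent v with
      | none => simp only [hp, Option.elim]; rw [hrootlvl v hp]; ring
      | some w => simp only [hp, Option.elim]; rw [hlvl v w hp]; ring
    rw [this, one_mul]
  -- expand both sides and finish
  have hLHS : ∑ v ∈ I, lvl v * ((s v : ℤ) - 1)
      = (∑ v ∈ I, lvl v * (s v : ℤ)) - ∑ v ∈ I, lvl v := by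
    rw [← Finset.sum_sub_distrib]
    refine Finset.sum_congr rfl fun v _ => by ring
  have hRHS : ∑ v ∈ I, ((n v : ℤ) - 1)
      = (∑ v ∈ I, (n v : ℤ)) - (I.card : ℤ) := by
    rw [Finset.sum_sub_distrib, Finset.sum_const, nsmul_eq_mul, mul_one]
  show ∑ v ∈ I, lvl v * ((s v : ℤ) - 1)
      = h * ((N : ℤ) - 1) + ∑ v ∈ I, (lvl v - (parent v).elim h lvl) * ((n v : ℤ) - 1)
  rw [hone, hLHS, hRHS, hE1, hE2, hC]
  have hN1' : (1 : ℤ) ≤ (N : ℤ) := by exact_mod_cast hN1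
  linarith [hAsplit, hcardV]
end
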